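/- Assume the axiomatic framework (A1)–(A5) for a dominant λ ∈ 𝔥*. Let α ∈ Π_λ, w ∈ W_λ, and μ ∈ 𝒟, and assume ⟨α,wλ⟩ = 0. Then M_λ(w,μ) ≅ M_λ(w,s_αμ) ≅ M_λ(s_αw,μ) ≅ M_λ(s_αw,s_αμ) in 𝒞. -/

import Mathlib

noncomputable section

open Complex

namespace Paper

variable {V : Type} [AddCommGroup V] [Module ℂ V]

/-- Data of the root system `Δ` of a complex semisimple Lie algebra inside `𝔥* = V`,
together with the (Killing-form induced) symmetric nondegenerate bilinear form and
a fixed positive system `Pos = Δ⁺`. -/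
structure RootDatum (V : Type) [AddCommGroup V] [Module ℂ V] : Type where
  /-- the bilinear form `⟨·,·⟩` on `𝔥*` induced by the Killing form -/
  B : V →ₗ[ℂ] V →ₗ[ℂ] ℂ
  Bsymm : ∀ x y, B x y = B y x
  Bnondeg : ∀ x, (∀ y, B x y = 0) → x = 0
  /-- the set of roots -/
  Δ : Set V
  finite : Δ.Finite
  zero_not_mem : (0 : V) ∉ Δ
  root_self_ne : ∀ α ∈ Δ, B α α ≠ 0
  neg_mem : ∀ α ∈ Δ, -α ∈ Δ
  refl_mem : ∀ α ∈ Δ, ∀ β ∈ Δ, β - ((2 / B α α) * B α β) • α ∈ Δ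
  pair_int : ∀ α ∈ Δ, ∀ β ∈ Δ, ∃ n : ℤ, (2 / B α α) * B α β = (n : ℂ)
  /-- the positive system `Δ⁺` -/
  Pos : Set V
  pos_subset : Pos ⊆ Δ
  pos_total : ∀ α ∈ Δ, α ∈ Pos ∨ -α ∈ Pos
  pos_not_neg : ∀ α ∈ Pos, -α ∉ Pos
  pos_closed : ∀ α ∈ Pos, ∀ β ∈ Pos, α + β ∈ Δ → α + β ∈ Pos

namespace RootDatum

variable (rd : RootDatum V)

/-- `⟨α̌, μ⟩` where `α̌ = 2α/⟨α,α⟩`. -/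
def pair (α μ : V) : ℂ := (2 / rd.B α α) * rd.B α μ

/-- The reflection `s_α` as a linear map:  `s_α(μ) = μ - ⟨α̌,μ⟩ α`. -/
def sLin (α : V) : V →ₗ[ℂ] V :=
  LinearMap.id - (2 / rd.B α α) • ((LinearMap.toSpanSingleton ℂ V α).comp (rd.B α))

lemma sLin_apply (α μ : V) : rd.sLin α μ = μ - rd.pair α μ • α := by
  simp [sLin, pair, LinearMap.toSpanSingleton, sub_eq_add_neg, mul_smul]

lemma s_involutive (α : V) : Function.Involutive (rd.sLin α) := by
  intro μ
  rw [rd.sLin_apply, rd.sLin_apply]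
  by_cases h : rd.B α α = 0
  · simp [pair, h]
  · have h1 : rd.pair α (μ - rd.pair α μ • α) = - rd.pair α μ := by
      simp only [pair, map_sub, map_smul]
      field_simp
      rw [smul_eq_mul, div_mul_cancel₀ _ h]
      ring
    rw [h1]
    module

/-- The reflection `s_α ∈ GL(𝔥*)`. -/
def s (α : V) : V ≃ₗ[ℂ] V :=
  LinearEquiv.ofInvolutive (rd.sLin α) (rd.s_involutive α)

lemma s_apply (α μ : V) : rd.s α μ = μ - rd.pair α μ • α := rd.sLin_apply α μ

/-- The Weyl group `W`, as the subgroup of `GL(𝔥*)` generated by the reflections. -/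
def W : Subgroup (V ≃ₗ[ℂ] V) := Subgroup.closure {g | ∃ α ∈ rd.Δ, g = rd.s α}

/-- `⟨α̌, μ⟩ ∈ ℤ` -/
def pairInt (α μ : V) : Prop := ∃ n : ℤ, rd.pair α μ = (n : ℂ)

/-- `⟨α̌, μ⟩ ∈ ℤ_{<0}` -/
def pairNegInt (α μ : V) : Prop := ∃ n : ℤ, n < 0 ∧ rd.pair α μ = (n : ℂ)

/-- the integral weight lattice `𝒫` -/
def P : Set V := {μ | ∀ α ∈ rd.Δ, rd.pairInt α μ}

/-- the integral root system `Δ_λ` -/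
def Δint (lam : V) : Set V := {α ∈ rd.Δ | rd.pairInt α lam}

/-- the integral Weyl group `W_λ = {w ∈ W ∣ wλ - λ ∈ 𝒫}` (as a subset of `GL(𝔥*)`) -/
def Wint (lam : V) : Set (V ≃ₗ[ℂ] V) := {w | w ∈ rd.W ∧ w lam - lam ∈ rd.P}

/-- `Δ_λ⁺ = Δ⁺ ∩ Δ_λ` -/
def PosInt (lam : V) : Set V := rd.Pos ∩ rd.Δint lam

/-- the simple roots `Π_λ` of `Δ_λ⁺`, i.e. the indecomposable positive roots -/
def SimpleInt (lam : V) : Set V :=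
  {α ∈ rd.PosInt lam | ¬ ∃ β ∈ rd.PosInt lam, ∃ γ ∈ rd.PosInt lam, α = β + γ}

/-- `W_λ⁰ = {w ∈ W_λ ∣ wλ = λ}` -/
def Wint0 (lam : V) : Set (V ≃ₗ[ℂ] V) := {w ∈ rd.Wint lam | w lam = lam}

/-- the length `ℓ_λ(w) = #(Δ_λ⁺ ∩ w⁻¹ Δ⁻)` of `w` as an element of `W_λ` -/
def lenInt (lam : V) (w : V ≃ₗ[ℂ] V) : ℕ :=
  Set.ncard {α | α ∈ rd.PosInt lam ∧ -(w α) ∈ rd.Pos}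

/-- `w` is the longest element `w_λ` of `W_λ`:  `w ∈ W_λ` and `w(Δ_λ⁺) = Δ_λ⁻`. -/
def IsLongest (lam : V) (w : V ≃ₗ[ℂ] V) : Prop :=
  w ∈ rd.Wint lam ∧ ∀ α ∈ rd.PosInt lam, -(w α) ∈ rd.PosInt lam

/-- `λ` is dominant: `⟨α̌,λ⟩ ∉ ℤ_{<0}` for all `α ∈ Δ⁺`. -/
def IsDominant (lam : V) : Prop := ∀ α ∈ rd.Pos, ¬ rd.pairNegInt α lam

/-- `(β_1, …, β_l)` with `β_i = s_{α_1} ⋯ s_{α_{i-1}} (α_i)`, for a sequence `(α_1, …, α_l)`. -/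
def betaList : List V → List V
  | [] => []
  | α :: L => α :: (betaList L).map (rd.s α)

/-- `s_{γ_r} ⋯ s_{γ_1} μ` for a list `(γ_1, …, γ_r)`. -/
def chainApply : List V → V → V
  | [], μ => μ
  | γ :: t, μ => chainApply t (rd.s γ μ)

/-- the condition `⟨γ̌_k, s_{γ_{k-1}} ⋯ s_{γ_1} μ⟩ ∈ ℤ_{<0}` for all `k`. -/
def chainCond : List V → V → Prop
  | [], _ => True
  | γ :: t, μ => rd.pairNegInt γ μ ∧ chainCond t (rd.s γ μ)

/-- The set `A_{(s_{α_1},…,s_{α_l})}(μ)` attached to the sequence `L = (α_1, …, α_l)`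
of simple roots: all `μ' = s_{β_{i_r}} ⋯ s_{β_{i_1}} μ` where `1 ≤ i_1 < ⋯ < i_r ≤ l` and
`⟨β̌_{i_k}, s_{β_{i_{k-1}}} ⋯ s_{β_{i_1}} μ⟩ ∈ ℤ_{<0}` for all `k = 1, …, r`. -/
def Aset (L : List V) (μ : V) : Set V :=
  {μ' | ∃ γs : List V, γs.Sublist (rd.betaList L) ∧ rd.chainCond γs μ ∧ μ' = rd.chainApply γs μ}

/-- `L = (α_1, …, α_l)` gives a reduced expression `w = s_{α_1} ⋯ s_{α_l}` of `w ∈ W_λ`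
as a product of elements of `S_λ`. -/
def IsReducedWord (lam : V) (w : V ≃ₗ[ℂ] V) (L : List V) : Prop :=
  (∀ α ∈ L, α ∈ rd.SimpleInt lam) ∧ (L.map rd.s).prod = w ∧ L.length = rd.lenInt lam w

/-- The set `W_λ⁰ w⁻¹ · S = {u w⁻¹ ν ∣ u ∈ W_λ⁰, ν ∈ S}`. -/
def orbitSet (lam : V) (w : V ≃ₗ[ℂ] V) (S : Set V) : Set V :=
  {x | ∃ u ∈ rd.Wint0 lam, ∃ ν ∈ S, x = u (w⁻¹ ν)}

end RootDatum

end Paper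

/- ### Auxiliary lemmas -/

namespace Paper.RootDatum

variable {V : Type} [AddCommGroup V] [Module ℂ V] (rd : RootDatum V)

lemma pair_add (α x y : V) : rd.pair α (x + y) = rd.pair α x + rd.pair α y := by
  simp [pair, mul_add]

lemma pair_sub (α x y : V) : rd.pair α (x - y) = rd.pair α x - rd.pair α y := by
  simp [pair, mul_sub]

lemma pair_smul (α : V) (c : ℂ) (x : V) : rd.pair α (c • x) = c * rd.pair α x := by
  simp [pair]; ring

lemma pair_neg (α x : V) : rd.pair α (-x) = -rd.pair α x := by
  simp [pair]

lemma pair_zero (α : V) : rd.pair α 0 = 0 := by simp [pair]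

lemma pair_self {α : V} (hα : α ∈ rd.Δ) : rd.pair α α = 2 := by
  have h := rd.root_self_ne α hα
  rw [pair, div_mul_cancel₀ _ h]

lemma pair_neg_left (γ x : V) : rd.pair (-γ) x = -rd.pair γ x := by
  simp [pair]
  try ring

lemma pair_smul_left {γ : V} (c : ℂ) (hc : c ≠ 0) (x : V) :
    rd.pair (c • γ) x = c⁻¹ * rd.pair γ x := by
  by_cases h : rd.B γ γ = 0
  · simp [pair, h, smul_smul]
  · simp only [pair, map_smul, LinearMap.smul_apply, smul_eq_mul]
    field_simp

lemma s_coe (α x : V) : rd.s α x = rd.sLin α x := rfl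

lemma s_s (α x : V) : rd.s α (rd.s α x) = x := rd.s_involutive α x

lemma s_self {α : V} (hα : α ∈ rd.Δ) : rd.s α α = -α := by
  rw [rd.s_apply, rd.pair_self hα, two_smul]
  abel

lemma s_mem {α β : V} (hα : α ∈ rd.Δ) (hβ : β ∈ rd.Δ) : rd.s α β ∈ rd.Δ := by
  rw [rd.s_apply]
  exact rd.refl_mem α hα β hβ

lemma lmul_apply (f g : V ≃ₗ[ℂ] V) (x : V) : (f * g) x = f (g x) := rfl

lemma lone_apply (x : V) : (1 : V ≃ₗ[ℂ] V) x = x := rfl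

lemma linv_apply (f : V ≃ₗ[ℂ] V) (x : V) : f (f⁻¹ x) = x := f.apply_symm_apply x

lemma linv_apply' (f : V ≃ₗ[ℂ] V) (x : V) : f⁻¹ (f x) = x := f.symm_apply_apply x

lemma s_mul_s (α : V) : rd.s α * rd.s α = 1 := by
  apply LinearEquiv.ext
  intro x
  exact rd.s_s α x

lemma s_inv (α : V) : (rd.s α)⁻¹ = rd.s α :=
  inv_eq_of_mul_eq_one_left (rd.s_mul_s α)

lemma B_s_s (α x y : V) : rd.B (rd.s α x) (rd.s α y) = rd.B x y := by
  by_cases h : rd.B α α = 0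
  · have hp : ∀ z, rd.pair α z = 0 := by intro z; simp [pair, h]
    rw [rd.s_apply, rd.s_apply, hp, hp]
    simp
  · rw [rd.s_apply, rd.s_apply]
    simp only [pair, map_sub, map_smul, LinearMap.sub_apply, LinearMap.smul_apply,
      smul_eq_mul]
    rw [rd.Bsymm x α]
    field_simp
    ring

lemma B_s_left (α x y : V) : rd.B (rd.s α x) y = rd.B x (rd.s α y) := by
  conv_lhs => rw [show y = rd.s α (rd.s α y) from (rd.s_s α y).symm]
  exact rd.B_s_s α x (rd.s α y)

lemma pair_s (α δ x : V) : rd.pair (rd.s α δ) x = rd.pair δ (rd.s α x) := by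
  unfold pair
  rw [rd.B_s_s α δ δ, rd.B_s_left α δ x]

/-- Elements of `W` preserve the form `B`. -/
lemma W_B {g : V ≃ₗ[ℂ] V} (hg : g ∈ rd.W) : ∀ x y, rd.B (g x) (g y) = rd.B x y := by
  induction hg using Subgroup.closure_induction with
  | mem a ha =>
    obtain ⟨α, -, rfl⟩ := ha
    exact rd.B_s_s α
  | one => intro x y; rfl
  | mul a b _ _ iha ihb =>
    intro x y
    rw [lmul_apply, lmul_apply, iha, ihb]
  | inv a _ iha =>
    intro x y
    have := iha (a⁻¹ x) (a⁻¹ y)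
    rw [linv_apply, linv_apply] at this
    exact this.symm

lemma pair_W {g : V ≃ₗ[ℂ] V} (hg : g ∈ rd.W) (δ x : V) :
    rd.pair (g δ) (g x) = rd.pair δ x := by
  unfold pair
  rw [rd.W_B hg, rd.W_B hg]

lemma pair_W' {g : V ≃ₗ[ℂ] V} (hg : g ∈ rd.W) (δ x : V) :
    rd.pair (g δ) x = rd.pair δ (g⁻¹ x) := by
  conv_lhs => rw [show x = g (g⁻¹ x) from (linv_apply g x).symm]
  exact rd.pair_W hg δ (g⁻¹ x)

/-- Elements of `W` preserve the root set. -/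
lemma W_root {g : V ≃ₗ[ℂ] V} (hg : g ∈ rd.W) :
    (∀ β ∈ rd.Δ, g β ∈ rd.Δ) ∧ (∀ β ∈ rd.Δ, g⁻¹ β ∈ rd.Δ) := by
  induction hg using Subgroup.closure_induction with
  | mem a ha =>
    obtain ⟨α, hα, rfl⟩ := ha
    constructor
    · intro β hβ; exact rd.s_mem hα hβ
    · intro β hβ; rw [rd.s_inv]; exact rd.s_mem hα hβ
  | one => exact ⟨fun β hβ => hβ, fun β hβ => by rwa [inv_one]⟩
  | mul a b _ _ iha ihb =>
    constructor
    · intro β hβ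
      rw [lmul_apply]
      exact iha.1 _ (ihb.1 _ hβ)
    · intro β hβ
      rw [mul_inv_rev, lmul_apply]
      exact ihb.2 _ (iha.2 _ hβ)
  | inv a _ iha =>
    refine ⟨iha.2, ?_⟩
    intro β hβ
    rw [inv_inv]
    exact iha.1 _ hβ

lemma s_mem_W {α : V} (hα : α ∈ rd.Δ) : rd.s α ∈ rd.W :=
  Subgroup.subset_closure ⟨α, hα, rfl⟩

lemma zero_mem_P : (0 : V) ∈ rd.P := by
  intro γ _
  exact ⟨0, by simp [pair]⟩

lemma pairInt_neg_left {γ x : V} (h : rd.pairInt γ x) : rd.pairInt (-γ) x := by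
  obtain ⟨n, hn⟩ := h
  exact ⟨-n, by rw [rd.pair_neg_left, hn]; push_cast; ring⟩

lemma P_sub_int_smul {x : V} (hx : x ∈ rd.P) {α : V} (hα : α ∈ rd.Δ) (n : ℤ) :
    x - (n : ℂ) • α ∈ rd.P := by
  intro γ hγ
  obtain ⟨m, hm⟩ := hx γ hγ
  obtain ⟨k, hk⟩ := rd.pair_int γ hγ α hα
  have hk' : rd.pair γ α = (k : ℂ) := hk
  refine ⟨m - n * k, ?_⟩
  rw [rd.pair_sub, rd.pair_smul, hm, hk']
  push_cast
  ring

lemma P_neg {x : V} (hx : x ∈ rd.P) : -x ∈ rd.P := by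
  intro γ hγ
  obtain ⟨n, hn⟩ := hx γ hγ
  exact ⟨-n, by rw [rd.pair_neg, hn]; push_cast; ring⟩

lemma P_W {g : V ≃ₗ[ℂ] V} (hg : g ∈ rd.W) {x : V} (hx : x ∈ rd.P) : g x ∈ rd.P := by
  intro γ hγ
  have h1 : rd.pair γ (g x) = rd.pair (g⁻¹ γ) x := by
    have := rd.pair_W hg (g⁻¹ γ) x
    rwa [linv_apply] at this
  obtain ⟨n, hn⟩ := hx _ ((rd.W_root hg).2 _ hγ)
  exact ⟨n, by rw [h1]; exact hn⟩

variable (lam : V)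

lemma one_mem_Wint : (1 : V ≃ₗ[ℂ] V) ∈ rd.Wint lam := by
  refine ⟨one_mem _, ?_⟩
  rw [lone_apply, sub_self]
  exact rd.zero_mem_P

lemma inv_mem_Wint {w : V ≃ₗ[ℂ] V} (hw : w ∈ rd.Wint lam) : w⁻¹ ∈ rd.Wint lam := by
  refine ⟨inv_mem hw.1, ?_⟩
  have h : w⁻¹ lam - lam = -(w⁻¹ ((w lam) - lam)) := by
    rw [map_sub, linv_apply']
    abel
  rw [h]
  exact rd.P_neg (rd.P_W (inv_mem hw.1) hw.2)

lemma mul_mem_Wint {w v : V ≃ₗ[ℂ] V} (hw : w ∈ rd.Wint lam) (hv : v ∈ rd.Wint lam) :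
    w * v ∈ rd.Wint lam := by
  refine ⟨mul_mem hw.1 hv.1, ?_⟩
  have h : (w * v) lam - lam = w (v lam - lam) + (w lam - lam) := by
    rw [lmul_apply, map_sub]
    abel
  rw [h]
  intro γ hγ
  obtain ⟨n, hn⟩ := rd.P_W hw.1 hv.2 γ hγ
  obtain ⟨m, hm⟩ := hw.2 γ hγ
  exact ⟨n + m, by rw [rd.pair_add, hn, hm]; push_cast; ring⟩

lemma s_mem_Wint {α : V} (hα : α ∈ rd.Δ) (hint : rd.pairInt α lam) :
    rd.s α ∈ rd.Wint lam := by
  refine ⟨rd.s_mem_W hα, ?_⟩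
  obtain ⟨n, hn⟩ := hint
  have h : rd.s α lam - lam = (0 : V) - (n : ℂ) • α := by
    rw [rd.s_apply, hn]
    abel
  rw [h]
  exact rd.P_sub_int_smul rd.zero_mem_P hα n

/-- Reflections in integral roots preserve integrality. -/
lemma int_reflect {β : V} (hβ : β ∈ rd.Δint lam) {γ : V} (hγ : γ ∈ rd.Δ)
    (hγi : rd.pairInt γ lam) : rd.pairInt (rd.s β γ) lam := by
  obtain ⟨hβΔ, nβ, hnβ⟩ := hβ
  obtain ⟨nγ, hnγ⟩ := hγi
  obtain ⟨k, hk⟩ := rd.pair_int γ hγ β hβΔ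
  have hk' : rd.pair γ β = (k : ℂ) := hk
  refine ⟨nγ - nβ * k, ?_⟩
  rw [rd.pair_s, rd.s_apply, rd.pair_sub, rd.pair_smul, hnγ, hnβ, hk']
  push_cast
  ring

/-- Integral Weyl group elements preserve integrality of roots. -/
lemma int_w {w : V ≃ₗ[ℂ] V} (hw : w ∈ rd.Wint lam) {γ : V} (hγ : γ ∈ rd.Δ)
    (hγi : rd.pairInt γ lam) : rd.pairInt (w γ) lam := by
  have h1 : rd.pair (w γ) lam = rd.pair γ lam - rd.pair (w γ) (w lam - lam) := by
    have h2 := rd.pair_W' hw.1 γ lam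
    have h3 : w⁻¹ lam = lam - w⁻¹ (w lam - lam) := by
      rw [map_sub, linv_apply']; abel
    rw [h2, h3, rd.pair_sub]
    have h4 : rd.pair γ (w⁻¹ (w lam - lam)) = rd.pair (w γ) (w lam - lam) := by
      have := rd.pair_W (inv_mem hw.1) (w γ) (w lam - lam)
      rwa [linv_apply'] at this
    rw [h4]
  obtain ⟨n, hn⟩ := hγi
  obtain ⟨m, hm⟩ := hw.2 (w γ) ((rd.W_root hw.1).1 γ hγ)
  exact ⟨n - m, by rw [h1, hn, hm]; push_cast; ring⟩

lemma mem_Δint_neg {γ : V} (h : γ ∈ rd.Δint lam) : -γ ∈ rd.Δint lam :=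
  ⟨rd.neg_mem γ h.1, by
    obtain ⟨n, hn⟩ := h.2
    exact ⟨-n, by rw [rd.pair_neg_left, hn]; push_cast; ring⟩⟩

/-! #### The auxiliary positive-definite form `f(x,y) = ∑ ⟨δ̌,x⟩⟨δ̌,y⟩` -/

open Classical in
/-- the integer `⟨α̌,x⟩` when it exists, `0` otherwise -/
noncomputable def np (x y : V) : ℤ :=
  if h : ∃ n : ℤ, rd.pair x y = (n : ℂ) then h.choose else 0

open Classical in
lemma np_spec {x y : V} (h : ∃ n : ℤ, rd.pair x y = (n : ℂ)) :
    ((rd.np x y : ℤ) : ℂ) = rd.pair x y := by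
  rw [np, dif_pos h]
  exact h.choose_spec.symm

lemma np_root {δ γ : V} (hδ : δ ∈ rd.Δ) (hγ : γ ∈ rd.Δ) :
    ((rd.np δ γ : ℤ) : ℂ) = rd.pair δ γ :=
  rd.np_spec (rd.pair_int δ hδ γ hγ)

/-- the `ℤ`-valued auxiliary form (meaningful on roots) -/
noncomputable def F (x y : V) : ℤ := ∑ δ ∈ rd.finite.toFinset, rd.np δ x * rd.np δ y

/-- the `ℂ`-valued auxiliary form -/
noncomputable def fC (x y : V) : ℂ := ∑ δ ∈ rd.finite.toFinset, rd.pair δ x * rd.pair δ y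

lemma F_cast {x y : V} (hx : x ∈ rd.Δ) (hy : y ∈ rd.Δ) : ((rd.F x y : ℤ) : ℂ) = rd.fC x y := by
  rw [F, fC]
  push_cast
  refine Finset.sum_congr rfl fun δ hδ => ?_
  have hδΔ : δ ∈ rd.Δ := (Set.Finite.mem_toFinset _).1 hδ
  rw [rd.np_root hδΔ hx, rd.np_root hδΔ hy]

lemma fC_symm (x y : V) : rd.fC x y = rd.fC y x :=
  Finset.sum_congr rfl fun δ _ => mul_comm _ _

lemma fC_sub (x y z : V) : rd.fC x (y - z) = rd.fC x y - rd.fC x z := by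
  rw [fC, fC, fC, ← Finset.sum_sub_distrib]
  refine Finset.sum_congr rfl fun δ _ => ?_
  rw [rd.pair_sub]
  ring

lemma fC_add (x y z : V) : rd.fC x (y + z) = rd.fC x y + rd.fC x z := by
  rw [fC, fC, fC, ← Finset.sum_add_distrib]
  refine Finset.sum_congr rfl fun δ _ => ?_
  rw [rd.pair_add]
  ring

lemma fC_smul (x : V) (c : ℂ) (y : V) : rd.fC x (c • y) = c * rd.fC x y := by
  rw [fC, fC, Finset.mul_sum]
  refine Finset.sum_congr rfl fun δ _ => ?_
  rw [rd.pair_smul]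
  ring

lemma fC_neg (x y : V) : rd.fC x (-y) = -rd.fC x y := by
  rw [fC, fC, ← Finset.sum_neg_distrib]
  refine Finset.sum_congr rfl fun δ _ => ?_
  rw [rd.pair_neg]
  ring

lemma fC_s {α : V} (hα : α ∈ rd.Δ) (x y : V) : rd.fC (rd.s α x) (rd.s α y) = rd.fC x y := by
  rw [fC, fC]
  have hre : ∀ z, ∀ δ ∈ rd.finite.toFinset, rd.pair δ (rd.s α z) = rd.pair (rd.s α δ) z :=
    fun z δ _ => (rd.pair_s α δ z).symm
  calc ∑ δ ∈ rd.finite.toFinset, rd.pair δ (rd.s α x) * rd.pair δ (rd.s α y)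
      = ∑ δ ∈ rd.finite.toFinset, rd.pair (rd.s α δ) x * rd.pair (rd.s α δ) y := by
        refine Finset.sum_congr rfl fun δ hδ => ?_
        rw [hre x δ hδ, hre y δ hδ]
    _ = ∑ δ ∈ rd.finite.toFinset, rd.pair δ x * rd.pair δ y := by
        refine Finset.sum_nbij' (fun δ => rd.s α δ) (fun δ => rd.s α δ) ?_ ?_ ?_ ?_ ?_
        · intro δ hδ
          exact (Set.Finite.mem_toFinset _).2 (rd.s_mem hα ((Set.Finite.mem_toFinset _).1 hδ))
        · intro δ hδ
          exact (Set.Finite.mem_toFinset _).2 (rd.s_mem hα ((Set.Finite.mem_toFinset _).1 hδ))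
        · intro δ _; exact rd.s_s α δ
        · intro δ _; exact rd.s_s α δ
        · intro δ _; rfl

/-- The key identity `2 f(α,x) = ⟨α̌,x⟩ f(α,α)` for a root `α`. -/
lemma fC_key {α : V} (hα : α ∈ rd.Δ) (x : V) :
    2 * rd.fC α x = rd.pair α x * rd.fC α α := by
  have h := rd.fC_s hα α x
  rw [rd.s_self hα] at h
  rw [show rd.fC (-α) (rd.s α x) = -rd.fC α (rd.s α x) by
        rw [rd.fC_symm (-α) _, rd.fC_neg, rd.fC_symm]] at h
  rw [rd.s_apply α x, rd.fC_sub, rd.fC_smul] at h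
  linear_combination -h

lemma F_self_pos {α : V} (hα : α ∈ rd.Δ) : 0 < rd.F α α := by
  have hmem : α ∈ rd.finite.toFinset := (Set.Finite.mem_toFinset _).2 hα
  have hterm : rd.np α α * rd.np α α = 4 := by
    have h2 : ((rd.np α α : ℤ) : ℂ) = 2 := by rw [rd.np_root hα hα, rd.pair_self hα]
    have : rd.np α α = 2 := by exact_mod_cast h2
    rw [this]; norm_num
  have hle : rd.np α α * rd.np α α ≤ rd.F α α :=
    Finset.single_le_sum (f := fun δ => rd.np δ α * rd.np δ α)
      (fun δ _ => mul_self_nonneg _) hmem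
  omega

lemma F_symm (x y : V) : rd.F x y = rd.F y x :=
  Finset.sum_congr rfl fun δ _ => mul_comm _ _

lemma F_key {α β : V} (hα : α ∈ rd.Δ) (hβ : β ∈ rd.Δ) {c : ℤ}
    (hc : rd.pair α β = (c : ℂ)) : 2 * rd.F α β = c * rd.F α α := by
  have h := rd.fC_key hα β
  rw [← rd.F_cast hα hβ, ← rd.F_cast hα hα, hc] at h
  exact_mod_cast h

lemma F_CS (α β : V) : rd.F α β ^ 2 ≤ rd.F α α * rd.F β β := by
  have h := Finset.sum_mul_sq_le_sq_mul_sq rd.finite.toFinset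
    (fun δ => rd.np δ α) (fun δ => rd.np δ β)
  have e1 : rd.F α β ^ 2 = (∑ δ ∈ rd.finite.toFinset, rd.np δ α * rd.np δ β) ^ 2 := rfl
  have e2 : rd.F α α = ∑ δ ∈ rd.finite.toFinset, (rd.np δ α) ^ 2 :=
    Finset.sum_congr rfl fun δ _ => (sq _).symm
  have e3 : rd.F β β = ∑ δ ∈ rd.finite.toFinset, (rd.np δ β) ^ 2 :=
    Finset.sum_congr rfl fun δ _ => (sq _).symm
  rw [e1, e2, e3]
  exact h

/-- Combined integer facts about a pair of roots. -/
lemma pair_facts {α β : V} (hα : α ∈ rd.Δ) (hβ : β ∈ rd.Δ) {c c' : ℤ}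
    (hc : rd.pair α β = (c : ℂ)) (hc' : rd.pair β α = (c' : ℂ)) :
    0 ≤ c * c' ∧ c * c' ≤ 4 ∧ (c = 0 ↔ c' = 0) := by
  have h1 : 2 * rd.F α β = c * rd.F α α := rd.F_key hα hβ hc
  have h2 : 2 * rd.F β α = c' * rd.F β β := rd.F_key hβ hα hc'
  have h3 : rd.F α β = rd.F β α := rd.F_symm α β
  have h4 : 0 < rd.F α α := rd.F_self_pos hα
  have h5 : 0 < rd.F β β := rd.F_self_pos hβ
  have hcs : rd.F α β * rd.F α β ≤ rd.F α α * rd.F β β := by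
    have := rd.F_CS α β
    nlinarith [this]
  have h7 : 4 * (rd.F α β * rd.F α β) = (c * c') * (rd.F α α * rd.F β β) := by
    linear_combination (2 * rd.F β α) * h1 + ((c : ℤ) * rd.F α α) * h2 + (4 * rd.F α β) * h3
  refine ⟨?_, ?_, ?_⟩
  · nlinarith [h7, mul_pos h4 h5, mul_self_nonneg (rd.F α β)]
  · nlinarith [h7, hcs, mul_pos h4 h5]
  · constructor
    · intro h0
      rw [h0, zero_mul] at h1
      have hz : rd.F β α = 0 := by omega
      rw [hz, mul_zero] at h2
      rcases mul_eq_zero.1 h2.symm with h | h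
      · exact h
      · omega
    · intro h0
      rw [h0, zero_mul] at h2
      have hz : rd.F α β = 0 := by omega
      rw [hz, mul_zero] at h1
      rcases mul_eq_zero.1 h1.symm with h | h
      · exact h
      · omega

/-- If `⟨α̌,β⟩⟨β̌,α⟩ = 4` for roots `α, β`, then `β` is proportional to `α`
(otherwise `s_α s_β` is unipotent ≠ 1 and generates infinitely many roots). -/
lemma prop_of_cc4 {α β : V} (hα : α ∈ rd.Δ) (hβ : β ∈ rd.Δ) {c c' : ℤ}
    (hc : rd.pair α β = (c : ℂ)) (hc' : rd.pair β α = (c' : ℂ)) (h4 : c * c' = 4) :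
    ∃ t : ℂ, β = t • α := by
  by_contra hind
  push_neg at hind
  have hc0 : c ≠ 0 := by rintro rfl; omega
  set d : V := (c : ℂ) • α - (2 : ℂ) • β with hd_def
  have hd : d ≠ 0 := by
    intro h
    apply hind ((c : ℂ) / 2)
    have : (c : ℂ) • α = (2 : ℂ) • β := by
      rw [← sub_eq_zero]; exact h
    rw [show ((c : ℂ) / 2) • α = (2 : ℂ)⁻¹ • ((c : ℂ) • α) by rw [smul_smul]; ring_nf]
    rw [this, smul_smul]
    norm_num
  have hpβd : rd.pair β d = 0 := by
    rw [hd_def, rd.pair_sub, rd.pair_smul, rd.pair_smul, hc', rd.pair_self hβ]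
    push_cast
    have : (c : ℂ) * (c' : ℂ) = 4 := by exact_mod_cast congrArg (Int.cast : ℤ → ℂ) h4
    linear_combination this
  have hpαd : rd.pair α d = 0 := by
    rw [hd_def, rd.pair_sub, rd.pair_smul, rd.pair_smul, hc, rd.pair_self hα]
    ring
  have hsβd : rd.s β d = d := by rw [rd.s_apply, hpβd, zero_smul, sub_zero]
  have hsαd : rd.s α d = d := by rw [rd.s_apply, hpαd, zero_smul, sub_zero]
  have hstep : ∀ x : V, rd.s α (rd.s β (x + d)) = rd.s α (rd.s β x) + d := by
    intro x
    rw [map_add, map_add, hsβd, hsαd]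
  have hsβB : rd.s β β = -β := rd.s_self hβ
  have hsαβ : rd.s α (-β) = β + d := by
    rw [map_neg, rd.s_apply, hc, hd_def]
    module
  have hmem : ∀ n : ℕ, β + (n : ℂ) • d ∈ rd.Δ := by
    intro n
    induction n with
    | zero => simpa using hβ
    | succ n ih =>
      have h1 : rd.s α (rd.s β (β + (n : ℂ) • d)) = β + ((n : ℂ) + 1) • d := by
        rw [map_add, map_smul, hsβd, map_add, map_smul, hsαd, hsβB, hsαβ]
        module
      rw [show β + ((n + 1 : ℕ) : ℂ) • d = β + ((n : ℂ) + 1) • d by push_cast; ring_nf, ← h1]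
      exact rd.s_mem hα (rd.s_mem hβ ih)
  have hinj : Function.Injective (fun n : ℕ => β + (n : ℂ) • d) := by
    intro n m h
    simp only [add_right_injective] at h
    have h2 : ((n : ℂ) - (m : ℂ)) • d = 0 := by
      rw [sub_smul]
      rw [show (n:ℂ) • d = (m:ℂ) • d from by exact add_left_cancel h]
      simp
    rcases smul_eq_zero.1 h2 with h | h
    · have : (n : ℂ) = (m : ℂ) := by linear_combination h
      exact_mod_cast this
    · exact absurd h hd
  exact absurd (Set.infinite_of_injective_forall_mem hinj hmem) rd.finite.not_infinite

/-- classification of root multiples:  if `γ = t•α` with `α,γ` roots then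
`t ∈ {±1, ±2, ±1/2}`. -/
lemma mult_classify {α γ : V} (hα : α ∈ rd.Δ) (hγ : γ ∈ rd.Δ) {t : ℂ}
    (ht : γ = t • α) :
    t = 1 ∨ t = -1 ∨ t = 2 ∨ t = -2 ∨ t = 1/2 ∨ t = -1/2 := by
  have ht0 : t ≠ 0 := by
    rintro rfl
    rw [zero_smul] at ht
    exact rd.zero_not_mem (ht ▸ hγ)
  obtain ⟨n, hn⟩ := rd.pair_int α hα γ hγ
  obtain ⟨m, hm⟩ := rd.pair_int γ hγ α hα
  have hn' : rd.pair α γ = (n : ℂ) := hn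
  have hm' : rd.pair γ α = (m : ℂ) := hm
  have h2t : (2 : ℂ) * t = n := by
    rw [← hn', ht, rd.pair_smul, rd.pair_self hα]
    ring
  have h2t' : (2 : ℂ) = (m : ℂ) * t := by
    rw [ht] at hm'
    rw [rd.pair_smul_left t ht0 α, rd.pair_self hα] at hm'
    field_simp at hm'
    linear_combination hm'
  have hnm : (n * m : ℤ) = 4 := by
    have : ((n : ℂ)) * m = 4 := by
      linear_combination (-(m : ℂ)) * h2t + (-2 : ℂ) * h2t'
    exact_mod_cast this
  have htn : t = (n : ℂ) / 2 := by linear_combination h2t / 2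
  have hn4 : n ∣ 4 := ⟨m, hnm.symm⟩
  have hb1 : n ≤ 4 := Int.le_of_dvd (by norm_num) hn4
  have hb2 : -4 ≤ n := by
    have : -n ≤ 4 := Int.le_of_dvd (by norm_num) ((neg_dvd).2 hn4)
    omega
  interval_cases n <;>
    first
      | (exfalso; omega)
      | (rw [htn]; norm_num)

lemma pos_mult {α : V} (hαΔ : α ∈ rd.Δ) (hαP : α ∈ rd.Pos) {γ : V} (hγΔ : γ ∈ rd.Δ)
    (hγP : γ ∈ rd.Pos) {t : ℂ} (ht : γ = t • α) : t = 1 ∨ t = 2 ∨ t = 1/2 := by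
  rcases rd.mult_classify hαΔ hγΔ ht with h | h | h | h | h | h
  · exact Or.inl h
  · exfalso
    subst h
    rw [show (-1 : ℂ) • α = -α by module] at ht
    exact rd.pos_not_neg α hαP (ht ▸ hγP)
  · exact Or.inr (Or.inl h)
  · exfalso
    subst h
    have hsum : γ + α ∈ rd.Δ := by
      rw [ht, show (-2 : ℂ) • α + α = -α by module]
      exact rd.neg_mem α hαΔ
    have := rd.pos_closed γ hγP α hαP hsum
    rw [ht, show (-2 : ℂ) • α + α = -α by module] at this
    exact rd.pos_not_neg α hαP this
  · exact Or.inr (Or.inr h)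
  · exfalso
    have h1 : α + γ = -γ := by rw [ht, h]; module
    have hsum : α + γ ∈ rd.Δ := by rw [h1]; exact rd.neg_mem γ hγΔ
    have := rd.pos_closed α hαP γ hγP hsum
    rw [h1] at this
    exact rd.pos_not_neg γ hγP this

lemma simple_no_half {α : V} (hα : α ∈ rd.SimpleInt lam) : (2 : ℂ)⁻¹ • α ∉ rd.Δ := by
  obtain ⟨⟨hαP, hαΔ, hαI⟩, hαind⟩ := hα
  intro h
  have hηI : rd.pairInt ((2 : ℂ)⁻¹ • α) lam := by
    obtain ⟨n, hn⟩ := hαI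
    refine ⟨2 * n, ?_⟩
    rw [rd.pair_smul_left _ (by norm_num) lam, inv_inv]
    rw [show rd.pair α lam = (n : ℂ) from hn]
    push_cast
    ring
  rcases rd.pos_total _ h with hp | hp
  · exact hαind ⟨(2 : ℂ)⁻¹ • α, ⟨hp, h, hηI⟩, (2 : ℂ)⁻¹ • α, ⟨hp, h, hηI⟩, by module⟩
  · have hsum : -((2 : ℂ)⁻¹ • α) + α ∈ rd.Δ := by
      rw [show -((2 : ℂ)⁻¹ • α) + α = (2 : ℂ)⁻¹ • α by module]
      exact h
    have := rd.pos_closed _ hp α hαP hsum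
    rw [show -((2 : ℂ)⁻¹ • α) + α = (2 : ℂ)⁻¹ • α by module] at this
    exact rd.pos_not_neg _ this hp

/-- **Key lemma**: the reflection in a simple integral root permutes the positive
integral roots not proportional to it. -/
lemma simple_s_pos {α : V} (hα : α ∈ rd.SimpleInt lam) {γ : V} (hγ : γ ∈ rd.PosInt lam)
    (hind : ∀ t : ℂ, γ ≠ t • α) : rd.s α γ ∈ rd.Pos := by
  obtain ⟨⟨hαP, hαΔ, hαI⟩, hαind⟩ := hα
  obtain ⟨hγP, hγΔ, hγI⟩ := hγ
  by_contra hneg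
  have hsγΔ : rd.s α γ ∈ rd.Δ := rd.s_mem hαΔ hγΔ
  have hbar : -(rd.s α γ) ∈ rd.Pos := (rd.pos_total _ hsγΔ).resolve_left hneg
  have hbarΔ : -(rd.s α γ) ∈ rd.Δ := rd.neg_mem _ hsγΔ
  have hsγI : rd.pairInt (rd.s α γ) lam := rd.int_reflect lam ⟨hαΔ, hαI⟩ hγΔ hγI
  have hbarI : rd.pairInt (-(rd.s α γ)) lam := rd.pairInt_neg_left hsγI
  have hbarPI : -(rd.s α γ) ∈ rd.PosInt lam := ⟨hbar, hbarΔ, hbarI⟩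
  have hγPI : γ ∈ rd.PosInt lam := ⟨hγP, hγΔ, hγI⟩
  obtain ⟨c, hc0⟩ := rd.pair_int α hαΔ γ hγΔ
  obtain ⟨c', hc'0⟩ := rd.pair_int γ hγΔ α hαΔ
  have hc : rd.pair α γ = (c : ℂ) := hc0
  have hc' : rd.pair γ α = (c' : ℂ) := hc'0
  have hbar_eq : -(rd.s α γ) = (c : ℂ) • α - γ := by
    rw [rd.s_apply, hc]; module
  obtain ⟨hcc0, hcc4, hciff⟩ := rd.pair_facts hαΔ hγΔ hc hc'
  -- auxiliary fC quantities
  have hS : ((rd.F α α : ℤ) : ℂ) = rd.fC α α := rd.F_cast hαΔ hαΔ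
  have hSne : rd.fC α α ≠ 0 := by
    rw [← hS]
    exact_mod_cast (rd.F_self_pos hαΔ).ne'
  have e1 : 2 * rd.fC α γ = (c : ℂ) * rd.fC α α := by
    have := rd.fC_key hαΔ γ; rwa [hc] at this
  have e2 : 2 * rd.fC γ α = (c' : ℂ) * rd.fC γ γ := by
    have := rd.fC_key hγΔ α; rwa [hc'] at this
  have e3 : rd.fC γ α = rd.fC α γ := rd.fC_symm γ α
  rcases lt_trichotomy c 0 with hcneg | hczero | hcpos
  · -- c < 0
    have hc'neg : c' < 0 := by
      rcases lt_trichotomy c' 0 with h | h | h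
      · exact h
      · exact absurd (hciff.mpr h) (by omega)
      · exact absurd (mul_neg_of_neg_of_pos hcneg h) (by linarith)
    by_cases h1 : c = -1
    · -- s_α γ = γ + α ∈ Pos, but also its negative is positive
      have hsum : α + γ ∈ rd.Δ := by
        have : rd.s α γ = α + γ := by rw [rd.s_apply, hc, h1]; push_cast; module
        exact this ▸ hsγΔ
      have hpos := rd.pos_closed α hαP γ hγP hsum
      have : -(α + γ) ∈ rd.Pos := by
        have : rd.s α γ = α + γ := by rw [rd.s_apply, hc, h1]; push_cast; module
        exact this ▸ hbar
      exact rd.pos_not_neg _ hpos this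
    · have hc2 : c ≤ -2 := by omega
      by_cases h4 : c * c' = 4
      · obtain ⟨t, ht⟩ := rd.prop_of_cc4 hαΔ hγΔ hc hc' h4
        exact hind t ht
      · have hc'1 : c' = -1 := by
          by_contra hne
          have h2' : c' ≤ -2 := by omega
          have h5 : (2 : ℤ) * 2 ≤ (-c) * (-c') :=
            mul_le_mul (by omega) (by omega) (by omega) (by omega)
          rw [neg_mul_neg] at h5
          have h6 : c * c' < 4 := lt_of_le_of_ne hcc4 h4
          linarith
        have hmc : c * c' = -c := by rw [hc'1]; ring
        rw [hmc] at hcc4 h4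
        have hc3 : -3 ≤ c := by omega
        -- θ := α + γ = s_γ α is a root and positive
        have hsγα : rd.s γ α = α + γ := by
          rw [rd.s_apply, hc', hc'1]; push_cast; module
        have hθΔ : α + γ ∈ rd.Δ := hsγα ▸ rd.s_mem hγΔ hαΔ
        have hθP : α + γ ∈ rd.Pos := rd.pos_closed α hαP γ hγP hθΔ
        by_cases hc2' : c = -2
        · -- (α+γ) + (−2α−γ) = −α positive: contradiction
          have hsum : (α + γ) + -(rd.s α γ) ∈ rd.Δ := by
            rw [hbar_eq, hc2', show (α + γ) + (((-2 : ℤ) : ℂ) • α - γ) = -α by push_cast; module]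
            exact rd.neg_mem α hαΔ
          have := rd.pos_closed _ hθP _ hbar hsum
          rw [hbar_eq, hc2', show (α + γ) + (((-2 : ℤ) : ℂ) • α - γ) = -α by push_cast; module]
            at this
          exact rd.pos_not_neg α hαP this
        · have hc3' : c = -3 := by omega
          -- pair (α+γ) α = −1, so 2α+γ is a root; then (2α+γ) + (−3α−γ) = −α : contradiction
          have e1' : 2 * rd.fC α γ = (-3 : ℂ) * rd.fC α α := by
            rw [e1, hc3']; push_cast; ring
          have hU : rd.fC γ γ = 3 * rd.fC α α := by
            have hc'c : (c' : ℂ) = -1 := by rw [hc'1]; push_cast; ring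
            rw [hc'c] at e2
            linear_combination -e1' + e2 - 2 * e3
          have l1 : rd.fC (α + γ) α = rd.fC α α + rd.fC α γ := by
            rw [rd.fC_symm (α + γ) α, rd.fC_add]
          have l2 : rd.fC (α + γ) (α + γ) =
              rd.fC α α + 2 * rd.fC α γ + rd.fC γ γ := by
            rw [rd.fC_add (α + γ) α γ, rd.fC_symm (α + γ) α, rd.fC_add,
              rd.fC_symm (α + γ) γ, rd.fC_add, e3]
            ring
          have e4 := rd.fC_key hθΔ α
          have hp : (rd.pair (α + γ) α + 1) * rd.fC α α = 0 := by
            linear_combination (-1 : ℂ) * e4 + 2 * l1 - rd.pair (α + γ) α * l2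
              + (1 - rd.pair (α + γ) α) * e1' - rd.pair (α + γ) α * hU
          have hp1 : rd.pair (α + γ) α = -1 := by
            have := (mul_eq_zero.1 hp).resolve_right hSne
            linear_combination this
          have hsθα : rd.s (α + γ) α = α + (α + γ) := by
            rw [rd.s_apply, hp1]; module
          have hξΔ : α + (α + γ) ∈ rd.Δ := hsθα ▸ rd.s_mem hθΔ hαΔ
          have hξP : α + (α + γ) ∈ rd.Pos := rd.pos_closed α hαP _ hθP hξΔ
          have hsum : (α + (α + γ)) + -(rd.s α γ) ∈ rd.Δ := by
            rw [hbar_eq, hc3',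
              show (α + (α + γ)) + (((-3 : ℤ) : ℂ) • α - γ) = -α by push_cast; module]
            exact rd.neg_mem α hαΔ
          have := rd.pos_closed _ hξP _ hbar hsum
          rw [hbar_eq, hc3',
            show (α + (α + γ)) + (((-3 : ℤ) : ℂ) • α - γ) = -α by push_cast; module] at this
          exact rd.pos_not_neg α hαP this
  · -- c = 0 : s_α γ = γ
    have : rd.s α γ = γ := by
      rw [rd.s_apply, hc, hczero]
      push_cast
      module
    rw [this] at hbar
    exact rd.pos_not_neg γ hγP hbar
  · -- c > 0
    have hc'pos : 0 < c' := by
      rcases lt_trichotomy c' 0 with h | h | h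
      · exact absurd (mul_neg_of_pos_of_neg hcpos h) (by linarith)
      · exact absurd (hciff.mpr h) (by omega)
      · exact h
    by_cases h1 : c = 1
    · -- α = (α − γ) + γ = (−s_α γ) + γ : decomposition of α
      refine hαind ⟨-(rd.s α γ), hbarPI, γ, hγPI, ?_⟩
      rw [hbar_eq, h1]
      push_cast
      module
    · have hc2 : 2 ≤ c := by omega
      by_cases h4 : c * c' = 4
      · obtain ⟨t, ht⟩ := rd.prop_of_cc4 hαΔ hγΔ hc hc' h4
        exact hind t ht
      · have hc'1 : c' = 1 := by
          by_contra hne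
          have h2' : 2 ≤ c' := by omega
          have h5 : (2 : ℤ) * 2 ≤ c * c' :=
            mul_le_mul hc2 h2' (by omega) (by omega)
          have h6 : c * c' < 4 := lt_of_le_of_ne hcc4 h4
          linarith
        have hmc : c * c' = c := by rw [hc'1]; ring
        rw [hmc] at hcc4 h4
        have hc3 : c ≤ 3 := by omega
        -- α − γ = s_γ α is a root
        have hsγα : rd.s γ α = α - γ := by
          rw [rd.s_apply, hc', hc'1]; push_cast; module
        have hηΔ : α - γ ∈ rd.Δ := hsγα ▸ rd.s_mem hγΔ hαΔ
        have hηI : rd.pairInt (α - γ) lam :=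
          hsγα ▸ rd.int_reflect lam ⟨hγΔ, hγI⟩ hαΔ hαI
        rcases rd.pos_total _ hηΔ with hp | hp
        · -- α = (α−γ) + γ
          exact hαind ⟨α - γ, ⟨hp, hηΔ, hηI⟩, γ, hγPI, by module⟩
        · have hγαPI : γ - α ∈ rd.PosInt lam := by
            refine ⟨by rwa [neg_sub] at hp, ?_, ?_⟩
            · have := rd.neg_mem _ hηΔ; rwa [neg_sub] at this
            · have := rd.pairInt_neg_left hηI
              rwa [neg_sub] at this
          by_cases hc2' : c = 2
          · -- α = (γ−α) + (2α−γ)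
            refine hαind ⟨γ - α, hγαPI, -(rd.s α γ), hbarPI, ?_⟩
            rw [hbar_eq, hc2']
            push_cast
            module
          · have hc3' : c = 3 := by omega
            have e1' : 2 * rd.fC α γ = (3 : ℂ) * rd.fC α α := by
              rw [e1, hc3']; push_cast; ring
            have hU : rd.fC γ γ = 3 * rd.fC α α := by
              have hc'c : (c' : ℂ) = 1 := by rw [hc'1]; push_cast; ring
              rw [hc'c] at e2
              linear_combination e1' + 2 * e3 - e2
            have l1 : rd.fC (α - γ) α = rd.fC α α - rd.fC α γ := by
              rw [rd.fC_symm (α - γ) α, rd.fC_sub]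
            have l2 : rd.fC (α - γ) (α - γ) =
                rd.fC α α - 2 * rd.fC α γ + rd.fC γ γ := by
              rw [rd.fC_sub (α - γ) α γ, rd.fC_symm (α - γ) α, rd.fC_sub,
                rd.fC_symm (α - γ) γ, rd.fC_sub, e3]
              ring
            have e4 := rd.fC_key hηΔ α
            have hp' : (rd.pair (α - γ) α + 1) * rd.fC α α = 0 := by
              linear_combination (-1 : ℂ) * e4 + 2 * l1 - rd.pair (α - γ) α * l2
                + (rd.pair (α - γ) α - 1) * e1' - rd.pair (α - γ) α * hU
            have hp1 : rd.pair (α - γ) α = -1 := by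
              have := (mul_eq_zero.1 hp').resolve_right hSne
              linear_combination this
            have hsηα : rd.s (α - γ) α = α + (α - γ) := by
              rw [rd.s_apply, hp1]; module
            have hζΔ : α + (α - γ) ∈ rd.Δ := hsηα ▸ rd.s_mem hηΔ hαΔ
            have hζI : rd.pairInt (α + (α - γ)) lam :=
              hsηα ▸ rd.int_reflect lam ⟨hηΔ, hηI⟩ hαΔ hαI
            rcases rd.pos_total _ hζΔ with hq | hq
            · -- α = (2α−γ) + (γ−α)
              exact hαind ⟨α + (α - γ), ⟨hq, hζΔ, hζI⟩, γ - α, hγαPI, by module⟩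
            · -- α = (γ−2α) + (3α−γ)
              refine hαind ⟨-(α + (α - γ)),
                ⟨hq, rd.neg_mem _ hζΔ, rd.pairInt_neg_left hζI⟩,
                -(rd.s α γ), hbarPI, ?_⟩
              rw [hbar_eq, hc3']
              push_cast
              module

/-- **Length lemma**: for a simple integral root `α` and `w ∈ W_λ`,
`ℓ_λ(s_α w) ≠ ℓ_λ(w)`. -/
lemma len_ne {α : V} (hα : α ∈ rd.SimpleInt lam) {w : V ≃ₗ[ℂ] V} (hw : w ∈ rd.Wint lam) :
    rd.lenInt lam (rd.s α * w) ≠ rd.lenInt lam w := by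
  have hαP : α ∈ rd.Pos := hα.1.1
  have hαΔ : α ∈ rd.Δ := hα.1.2.1
  have hαI : rd.pairInt α lam := hα.1.2.2
  set N0 := {β : V | β ∈ rd.PosInt lam ∧ -(w β) ∈ rd.Pos} with hN0
  set N1 := {β : V | β ∈ rd.PosInt lam ∧ -((rd.s α * w) β) ∈ rd.Pos} with hN1
  have hlen0 : rd.lenInt lam w = N0.ncard := rfl
  have hlen1 : rd.lenInt lam (rd.s α * w) = N1.ncard := rfl
  have hsub0 : N0 ⊆ rd.Δ := fun β hβ => hβ.1.2.1
  have hsub1 : N1 ⊆ rd.Δ := fun β hβ => hβ.1.2.1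
  have hfin0 : N0.Finite := rd.finite.subset hsub0
  have hfin1 : N1.Finite := rd.finite.subset hsub1
  set δ := w⁻¹ α with hδ
  have hwinv : w⁻¹ ∈ rd.Wint lam := rd.inv_mem_Wint lam hw
  have hδΔ : δ ∈ rd.Δ := (rd.W_root hw.1).2 α hαΔ
  have hδI : rd.pairInt δ lam := rd.int_w lam hwinv hαΔ hαI
  have hwδ : w δ = α := linv_apply w α
  have hsame : ∀ β ∈ rd.PosInt lam, (∀ t : ℂ, w β ≠ t • α) → (β ∈ N0 ↔ β ∈ N1) := by
    intro β hβ hnp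
    have hwβΔ : w β ∈ rd.Δ := (rd.W_root hw.1).1 β hβ.2.1
    have hwβI : rd.pairInt (w β) lam := rd.int_w lam hw hβ.2.1 hβ.2.2
    constructor
    · intro hβ0
      refine ⟨hβ, ?_⟩
      have hmPI : -(w β) ∈ rd.PosInt lam :=
        ⟨hβ0.2, rd.neg_mem _ hwβΔ, rd.pairInt_neg_left hwβI⟩
      have hnp' : ∀ t : ℂ, -(w β) ≠ t • α := by
        intro t h
        exact hnp (-t) (by rw [← neg_neg (w β), h]; module)
      have h2 := rd.simple_s_pos lam hα hmPI hnp'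
      rw [map_neg] at h2
      show -(rd.s α (w β)) ∈ rd.Pos
      exact h2
    · intro hβ1
      refine ⟨hβ, ?_⟩
      have h1 : -(rd.s α (w β)) ∈ rd.Pos := hβ1.2
      have hsPI : -(rd.s α (w β)) ∈ rd.PosInt lam :=
        ⟨h1, rd.neg_mem _ (rd.s_mem hαΔ hwβΔ),
          rd.pairInt_neg_left (rd.int_reflect lam ⟨hαΔ, hαI⟩ hwβΔ hwβI)⟩
      have hnp' : ∀ t : ℂ, -(rd.s α (w β)) ≠ t • α := by
        intro t h
        apply hnp t
        have h2 : rd.s α (w β) = (-t) • α := by rw [← neg_neg (rd.s α (w β)), h]; module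
        have h3 : w β = rd.s α ((-t) • α) := by rw [← h2, rd.s_s]
        rw [map_smul, rd.s_self hαΔ] at h3
        rw [h3]; module
      have h2 := rd.simple_s_pos lam hα hsPI hnp'
      rw [map_neg, rd.s_s] at h2
      exact h2
  rcases rd.pos_total δ hδΔ with hp | hp
  · -- `δ ∈ Pos`:  `N0 ⊊ N1`
    have hδPI : δ ∈ rd.PosInt lam := ⟨hp, hδΔ, hδI⟩
    have hmono : N0 ⊆ N1 := by
      intro β hβ0
      by_cases hnp : ∀ t : ℂ, w β ≠ t • α
      · exact (hsame β hβ0.1 hnp).1 hβ0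
      · push_neg at hnp
        obtain ⟨t, ht⟩ := hnp
        exfalso
        have hwβΔ : w β ∈ rd.Δ := (rd.W_root hw.1).1 β hβ0.1.2.1
        have hmΔ : -(w β) ∈ rd.Δ := rd.neg_mem _ hwβΔ
        have hmP : -(w β) ∈ rd.Pos := hβ0.2
        have hmult := rd.pos_mult hαΔ hαP hmΔ hmP (t := -t) (by rw [ht]; module)
        have hβδ : β = t • δ := by
          have h5 : w⁻¹ (w β) = w⁻¹ (t • α) := congrArg _ ht
          rwa [linv_apply', map_smul] at h5
        have hβP : β ∈ rd.Pos := hβ0.1.1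
        have hβΔ : β ∈ rd.Δ := hβ0.1.2.1
        rcases hmult with h | h | h
        · have ht1 : t = -1 := by linear_combination -h
          exact rd.pos_not_neg δ hp (by rw [show -δ = β by rw [hβδ, ht1]; module]; exact hβP)
        · have ht1 : t = -2 := by linear_combination -h
          have hsum : β + δ ∈ rd.Δ := by
            rw [show β + δ = -δ by rw [hβδ, ht1]; module]
            exact rd.neg_mem δ hδΔ
          have h6 := rd.pos_closed β hβP δ hp hsum
          rw [show β + δ = -δ by rw [hβδ, ht1]; module] at h6
          exact rd.pos_not_neg δ hp h6
        · have ht1 : t = -(1/2) := by linear_combination -h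
          have hsum : β + δ ∈ rd.Δ := by
            rw [show β + δ = -β by rw [hβδ, ht1]; module]
            exact rd.neg_mem β hβΔ
          have h6 := rd.pos_closed β hβP δ hp hsum
          rw [show β + δ = -β by rw [hβδ, ht1]; module] at h6
          exact rd.pos_not_neg β hβP h6
    have hδN1 : δ ∈ N1 := by
      refine ⟨hδPI, ?_⟩
      show -(rd.s α (w δ)) ∈ rd.Pos
      rw [hwδ, rd.s_self hαΔ, neg_neg]
      exact hαP
    have hδN0 : δ ∉ N0 := by
      intro h
      have h2 : -(w δ) ∈ rd.Pos := h.2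
      rw [hwδ] at h2
      exact rd.pos_not_neg α hαP h2
    have hlt : N0.ncard < N1.ncard :=
      Set.ncard_lt_ncard ((Set.ssubset_iff_of_subset hmono).2 ⟨δ, hδN1, hδN0⟩) hfin1
    omega
  · -- `-δ ∈ Pos`:  `N1 ⊊ N0`
    have hmδPI : -δ ∈ rd.PosInt lam := ⟨hp, rd.neg_mem _ hδΔ, rd.pairInt_neg_left hδI⟩
    have hmono : N1 ⊆ N0 := by
      intro β hβ1
      by_cases hnp : ∀ t : ℂ, w β ≠ t • α
      · exact (hsame β hβ1.1 hnp).2 hβ1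
      · push_neg at hnp
        obtain ⟨t, ht⟩ := hnp
        exfalso
        have hwβΔ : w β ∈ rd.Δ := (rd.W_root hw.1).1 β hβ1.1.2.1
        have h1 : -(rd.s α (w β)) = t • α := by
          rw [ht, map_smul, rd.s_self hαΔ]; module
        have h2 : t • α ∈ rd.Pos := by
          rw [← h1]
          exact hβ1.2
        have h3 : t • α ∈ rd.Δ := by
          rw [← h1]
          exact rd.neg_mem _ (rd.s_mem hαΔ hwβΔ)
        have hmult := rd.pos_mult hαΔ hαP h3 h2 (t := t) rfl
        have hβδ : β = t • δ := by
          have h5 : w⁻¹ (w β) = w⁻¹ (t • α) := congrArg _ ht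
          rwa [linv_apply', map_smul] at h5
        have hβP : β ∈ rd.Pos := hβ1.1.1
        have hβΔ : β ∈ rd.Δ := hβ1.1.2.1
        have hδnP : δ ∉ rd.Pos := by
          intro hcon
          exact rd.pos_not_neg δ hcon hp
        rcases hmult with h | h | h
        · exact hδnP (by rw [show δ = β by rw [hβδ, h]; module]; exact hβP)
        · have hsum : β + -δ ∈ rd.Δ := by
            rw [show β + -δ = δ by rw [hβδ, h]; module]
            exact hδΔ
          have h6 := rd.pos_closed β hβP (-δ) hp hsum
          rw [show β + -δ = δ by rw [hβδ, h]; module] at h6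
          exact hδnP h6
        · have hsum : -δ + β ∈ rd.Δ := by
            rw [show -δ + β = -β by rw [hβδ, h]; module]
            exact rd.neg_mem β hβΔ
          have h6 := rd.pos_closed (-δ) hp β hβP hsum
          rw [show -δ + β = -β by rw [hβδ, h]; module] at h6
          exact rd.pos_not_neg β hβP h6
    have hδN0 : -δ ∈ N0 := by
      refine ⟨hmδPI, ?_⟩
      rw [map_neg, neg_neg, hwδ]
      exact hαP
    have hδN1 : -δ ∉ N1 := by
      intro h
      have h2 : -(rd.s α (w (-δ))) ∈ rd.Pos := h.2
      rw [map_neg, hwδ, map_neg, rd.s_self hαΔ, neg_neg] at h2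
      exact rd.pos_not_neg α hαP h2
    have hlt : N1.ncard < N0.ncard :=
      Set.ncard_lt_ncard ((Set.ssubset_iff_of_subset hmono).2 ⟨-δ, hδN0, hδN1⟩) hfin0
    omega

end Paper.RootDatum

open Paper CategoryTheory

universe u v w'

/-- Lemma 2.2. Under (A1)–(A5), if `α ∈ Π_λ`, `w ∈ W_λ`, `μ ∈ 𝒟` and
`⟨α, wλ⟩ = 0`, then `M_λ(w,μ) ≅ M_λ(w,s_α μ) ≅ M_λ(s_α w,μ) ≅ M_λ(s_α w,s_α μ)`. -/
theorem statement3 {C : Type u} [Category.{v} C] [Abelian C] [EnoughInjectives C] [HasExt.{w'} C]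
    {V : Type} [AddCommGroup V] [Module ℂ V] (rd : RootDatum V)
    -- a dominant `λ ∈ 𝔥*`
    (lam : V) (hdom : rd.IsDominant lam)
    -- the longest element `w_λ` of `W_λ`
    (wl : V ≃ₗ[ℂ] V) (hwl : rd.IsLongest lam wl)
    -- a `W_λ`-stable subset `𝒟 ⊆ 𝔥*`
    (D : Set V) (hD : ∀ w ∈ rd.Wint lam, ∀ μ ∈ D, w μ ∈ D)
    -- the family of objects `M_λ(w, μ)` of `𝒞`
    (M : (V ≃ₗ[ℂ] V) → V → C)
    -- (A1)  `M_λ(ww',μ) ≅ M_λ(w,μ)` for `w ∈ W_λ`, `w' ∈ W_λ⁰`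
    (hA1 : ∀ w ∈ rd.Wint lam, ∀ w' ∈ rd.Wint0 lam, ∀ μ ∈ D,
      Nonempty (M (w * w') μ ≅ M w μ))
    -- (A2)  for `α ∈ Π_λ` with `s_α w > w`, if `⟨α̌,μ⟩ ∉ ℤ_{<0}` then `M_λ(s_α w,μ) ≅ M_λ(w,s_α μ)`
    (hA2 : ∀ α ∈ rd.SimpleInt lam, ∀ w ∈ rd.Wint lam,
      rd.lenInt lam (rd.s α * w) > rd.lenInt lam w → ∀ μ ∈ D, ¬ rd.pairNegInt α μ →
      Nonempty (M (rd.s α * w) μ ≅ M w (rd.s α μ)))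
    -- (A3)  for `α ∈ Π_λ` with `s_α w > w`, `⟨α,wλ⟩ ≠ 0` and `⟨α̌,μ⟩ ∈ ℤ_{<0}`, an exact sequence
    --       `0 → M_λ(w,μ) → M_λ(s_α w,μ) → M_λ(w,s_α μ) → M_λ(w,μ) → 0`
    (hA3 : ∀ α ∈ rd.SimpleInt lam, ∀ w ∈ rd.Wint lam,
      rd.lenInt lam (rd.s α * w) > rd.lenInt lam w → rd.B α (w lam) ≠ 0 →
      ∀ μ ∈ D, rd.pairNegInt α μ →
      ∃ (f : M w μ ⟶ M (rd.s α * w) μ) (g : M (rd.s α * w) μ ⟶ M w (rd.s α μ))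
        (h : M w (rd.s α μ) ⟶ M w μ) (w1 : f ≫ g = 0) (w2 : g ≫ h = 0),
        Mono f ∧ Epi h ∧ (ShortComplex.mk f g w1).Exact ∧ (ShortComplex.mk g h w2).Exact)
    -- (A4)  `Hom(M_λ(w_λ,μ'), M_λ(e,μ)) ≠ 0  ↔  μ ∈ W_λ⁰ w_λ μ'`
    (hA4 : ∀ μ' ∈ D, ∀ μ ∈ D,
      (∃ f : M wl μ' ⟶ M 1 μ, f ≠ 0) ↔ ∃ u ∈ rd.Wint0 lam, μ = (u * wl) μ')
    -- (A5)  `Ext^k(M_λ(w_λ,μ'), M_λ(e,μ)) = 0` for `k > 0`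
    (hA5 : ∀ μ' ∈ D, ∀ μ ∈ D, ∀ k : ℕ, 0 < k →
      ∀ e : Abelian.Ext (M wl μ') (M 1 μ) k, e = 0)
    (α : V) (hα : α ∈ rd.SimpleInt lam) (w : V ≃ₗ[ℂ] V) (hw : w ∈ rd.Wint lam)
    (μ : V) (hμ : μ ∈ D) (hzero : rd.B α (w lam) = 0) :
    Nonempty (M w μ ≅ M w (rd.s α μ)) ∧
    Nonempty (M w μ ≅ M (rd.s α * w) μ) ∧
    Nonempty (M w μ ≅ M (rd.s α * w) (rd.s α μ)) := by
  classical
  have hαP : α ∈ rd.Pos := hα.1.1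
  have hαΔ : α ∈ rd.Δ := hα.1.2.1
  have hαI : rd.pairInt α lam := hα.1.2.2
  have hsαW : rd.s α ∈ rd.Wint lam := rd.s_mem_Wint lam hαΔ hαI
  have hsw : rd.s α * w ∈ rd.Wint lam := rd.mul_mem_Wint lam hsαW hw
  have hμs : rd.s α μ ∈ D := hD _ hsαW μ hμ
  have hp0 : rd.pair α (w lam) = 0 := by rw [RootDatum.pair, hzero, mul_zero]
  -- the element `u = w⁻¹ s_α w ∈ W_λ⁰`
  set u : V ≃ₗ[ℂ] V := w⁻¹ * (rd.s α * w) with hu_def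
  have hufix : u lam = lam := by
    rw [hu_def, Paper.RootDatum.lmul_apply, Paper.RootDatum.lmul_apply, rd.s_apply, hp0,
      zero_smul, sub_zero, Paper.RootDatum.linv_apply']
  have huW : u ∈ rd.W := by
    rw [hu_def]
    exact mul_mem (inv_mem hw.1) (mul_mem (rd.s_mem_W hαΔ) hw.1)
  have hu : u ∈ rd.Wint0 lam := by
    refine ⟨⟨huW, ?_⟩, hufix⟩
    rw [hufix, sub_self]
    exact rd.zero_mem_P
  have hgw : (rd.s α * w) * u = w := by
    rw [hu_def]
    have h1 : (rd.s α * w) * (w⁻¹ * (rd.s α * w)) = rd.s α * (rd.s α * w) := by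
      group
    rw [h1, ← mul_assoc, rd.s_mul_s, one_mul]
  have iso1 : ∀ ν ∈ D, Nonempty (M w ν ≅ M (rd.s α * w) ν) := by
    intro ν hν
    obtain ⟨e⟩ := hA1 (rd.s α * w) hsw u hu ν hν
    rw [hgw] at e
    exact ⟨e⟩
  have hlen := rd.len_ne lam hα hw
  have hnegneg : rd.pairNegInt α μ → ¬rd.pairNegInt α (rd.s α μ) := by
    rintro ⟨n, hn0, hnn⟩ ⟨m, hm0, hm⟩
    have h1 : rd.pair α (rd.s α μ) = (-n : ℤ) := by
      rw [rd.s_apply, rd.pair_sub, rd.pair_smul, rd.pair_self hαΔ, hnn]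
      push_cast
      ring
    rw [h1] at hm
    have : (-n : ℤ) = m := by exact_mod_cast hm
    omega
  have cross : Nonempty (M w μ ≅ M w (rd.s α μ)) := by
    rcases Nat.lt_or_ge (rd.lenInt lam w) (rd.lenInt lam (rd.s α * w)) with hl | hl
    · by_cases hneg : rd.pairNegInt α μ
      · obtain ⟨e⟩ := hA2 α hα w hw hl (rd.s α μ) hμs (hnegneg hneg)
        rw [rd.s_s α μ] at e
        obtain ⟨j⟩ := iso1 (rd.s α μ) hμs
        exact ⟨(j.trans e).symm⟩
      · obtain ⟨e⟩ := hA2 α hα w hw hl μ hμ hneg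
        obtain ⟨j⟩ := iso1 μ hμ
        exact ⟨j.trans e⟩
    · have hl' : rd.lenInt lam (rd.s α * w) < rd.lenInt lam w :=
        lt_of_le_of_ne hl hlen
      have hsv : rd.s α * (rd.s α * w) = w := by
        rw [← mul_assoc, rd.s_mul_s, one_mul]
      have hlv : rd.lenInt lam (rd.s α * (rd.s α * w)) > rd.lenInt lam (rd.s α * w) := by
        rw [hsv]
        exact hl'
      by_cases hneg : rd.pairNegInt α μ
      · obtain ⟨e⟩ := hA2 α hα (rd.s α * w) hsw hlv (rd.s α μ) hμs (hnegneg hneg)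
        rw [hsv, rd.s_s α μ] at e
        -- e : M w (s α μ) ≅ M (s α * w) μ
        obtain ⟨j⟩ := iso1 μ hμ
        exact ⟨(j.trans e.symm)⟩
      · obtain ⟨e⟩ := hA2 α hα (rd.s α * w) hsw hlv μ hμ hneg
        rw [hsv] at e
        -- e : M w μ ≅ M (s α * w) (s α μ)
        obtain ⟨j⟩ := iso1 (rd.s α μ) hμs
        exact ⟨e.trans j.symm⟩
  refine ⟨cross, iso1 μ hμ, ?_⟩
  obtain ⟨c⟩ := cross
  obtain ⟨j⟩ := iso1 (rd.s α μ) hμs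
  exact ⟨c.trans j⟩
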